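/- arXiv:2208.14208 — 3 statements merged into one kernel-verified Lean document; each statement's English description precedes it below -/
import Mathlib

section
/- Let α, β, γ, δ ∈ ℂ, f(u) = u·θ(|u|²) with θ(s) = γ·s + δ·s², and let Df(V)z := θ(|V|²)z + |V|²θ'(|V|²)z + V²θ'(|V|²)conj(z) with θ'(s) = γ + 2δ·s. Let V : ℝ → ℂ be twice differentiable with α V'' + β V + f(V) = 0 on ℝ; let r_k, g_k : ℝ → ℝ (k = 1,…,n) be differentiable; set V_{ξ_k}(t,x) := e^{i g_k(t)} V(x − r_k(t)), V_Σ := Σ_{k=1}^n V_{ξ_k}, φ^r_{ξ_k} := −e^{i g_k}V'(·−r_k), φ^g_{ξ_k} := i e^{i g_k}V(·−r_k). Suppose w : ℝ × ℝ → ℂ has partial derivatives ∂_t w, ∂_x w, ∂_{xx} w, and that u := V_Σ + w satisfies the QCGLE ∂_t u = α ∂_{xx} u + β u + f(u). Then w satisfies ∂_t w − α ∂_{xx} w − β w − Df(V_Σ)w = −Σ_{k=1}^n r_k'(t)·φ^r_{ξ_k} − Σ_{k=1}^n g_k'(t)·φ^g_{ξ_k} + Φ + G, where Φ := f(V_Σ)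 − Σ_{k=1}^n f(V_{ξ_k}) is the interaction function and G := f(V_Σ + w) − f(V_Σ) − Df(V_Σ)w. -/
open Complex

/-- The QCGLE nonlinearity `f(u) = γ u|u|² + δ u|u|⁴ = u θ(|u|²)`. -/
noncomputable def qcgleF (γ δ : ℂ) (u : ℂ) : ℂ :=
  γ * u * (‖u‖ : ℂ) ^ 2 + δ * u * (‖u‖ : ℂ) ^ 4

/-- The real-linear Fréchet derivative of the QCGLE nonlinearity at `a`, applied to `z`:
`Df(a)z = θ(|a|²) z + |a|² θ'(|a|²) z + a² θ'(|a|²) conj z`. -/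
noncomputable def qcgleDf (γ δ : ℂ) (a z : ℂ) : ℂ :=
  (γ * (‖a‖ : ℂ) ^ 2 + δ * ((‖a‖ : ℂ) ^ 2) ^ 2) * z
    + (‖a‖ : ℂ) ^ 2 * (γ + 2 * δ * (‖a‖ : ℂ) ^ 2) * z
    + a ^ 2 * (γ + 2 * δ * (‖a‖ : ℂ) ^ 2) * (starRingEnd ℂ) z

/-- The multi-pulse ansatz `V_Σ(t,x) = Σ_k e^{i g_k(t)} V(x − r_k(t))`. -/
noncomputable def pulseSum (V : ℝ → ℂ) {n : ℕ} (r g : Fin n → ℝ → ℝ) (t x : ℝ) : ℂ :=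
  ∑ k : Fin n, Complex.exp (Complex.I * g k t) * V (x - r k t)

lemma abs_exp_I_mul (a : ℝ) : ‖Complex.exp (Complex.I * a)‖ = 1 := by
  rw [mul_comm]; exact Complex.norm_exp_ofReal_mul_I a

lemma qcgleF_phase (γ δ : ℂ) (a : ℝ) (z : ℂ) :
    qcgleF γ δ (Complex.exp (Complex.I * a) * z)
      = Complex.exp (Complex.I * a) * qcgleF γ δ z := by
  simp only [qcgleF, norm_mul, abs_exp_I_mul, one_mul]
  ring

/-- The exact equation satisfied by the remainder `w` in the multi-pulse decomposition
`u = V_Σ + w` of a solution of the QCGLE `∂_t u = α ∂_xx u + β u + f(u)`: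
`∂_t w − α ∂_xx w − β w − Df(V_Σ)w = −Σ_k ṙ_k φ^r_{ξ_k} − Σ_k ġ_k φ^g_{ξ_k} + Φ + G`. -/
theorem remainder_equation
    (α β γ δ : ℂ) (V : ℝ → ℂ)
    (hV : Differentiable ℝ V) (hV' : Differentiable ℝ (deriv V))
    (hVeq : ∀ x : ℝ, α * deriv (deriv V) x + β * V x + qcgleF γ δ (V x) = 0)
    {n : ℕ} (r g : Fin n → ℝ → ℝ)
    (hr : ∀ k, Differentiable ℝ (r k)) (hg : ∀ k, Differentiable ℝ (g k))
    (w : ℝ → ℝ → ℂ)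
    (hwt : ∀ x : ℝ, Differentiable ℝ (fun t : ℝ => w t x))
    (hwx : ∀ t : ℝ, Differentiable ℝ (w t))
    (hwxx : ∀ t : ℝ, Differentiable ℝ (deriv (w t)))
    (hu : ∀ t x : ℝ,
      deriv (fun s : ℝ => pulseSum V r g s x + w s x) t
        = α * deriv (deriv (fun y : ℝ => pulseSum V r g t y + w t y)) x
          + β * (pulseSum V r g t x + w t x)
          + qcgleF γ δ (pulseSum V r g t x + w t x)) :
    ∀ t x : ℝ,
      deriv (fun s : ℝ => w s x) t - α * deriv (deriv (w t)) x - β * w t x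
          - qcgleDf γ δ (pulseSum V r g t x) (w t x)
        = -(∑ k : Fin n, (Complex.ofReal (deriv (r k) t))
              * (-(Complex.exp (Complex.I * g k t)) * deriv V (x - r k t)))
          - (∑ k : Fin n, (Complex.ofReal (deriv (g k) t))
              * (Complex.I * Complex.exp (Complex.I * g k t) * V (x - r k t)))
          + (qcgleF γ δ (pulseSum V r g t x)
              - ∑ k : Fin n, qcgleF γ δ (Complex.exp (Complex.I * g k t) * V (x - r k t)))
          + (qcgleF γ δ (pulseSum V r g t x + w t x) - qcgleF γ δ (pulseSum V r g t x)
              - qcgleDf γ δ (pulseSum V r g t x) (w t x)) := by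
  intro t x
  -- time derivative of the pulse sum
  have hPt : deriv (fun s : ℝ => pulseSum V r g s x + w s x) t
      = (∑ k : Fin n,
          (Complex.exp (Complex.I * g k t) * (Complex.I * Complex.ofReal (deriv (g k) t))
              * V (x - r k t)
            + Complex.exp (Complex.I * g k t)
              * ((-(deriv (r k) t)) • deriv V (x - r k t))))
        + deriv (fun s : ℝ => w s x) t := by
    have hsum : HasDerivAt (fun s : ℝ => pulseSum V r g s x)
        (∑ k : Fin n,
          (Complex.exp (Complex.I * g k t) * (Complex.I * Complex.ofReal (deriv (g k) t))
              * V (x - r k t)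
            + Complex.exp (Complex.I * g k t)
              * ((-(deriv (r k) t)) • deriv V (x - r k t)))) t := by
      apply HasDerivAt.fun_sum
      intro k _
      have h1 : HasDerivAt (fun s : ℝ => ((g k s : ℝ) : ℂ))
          (Complex.ofReal (deriv (g k) t)) t := (hg k t).hasDerivAt.ofReal_comp
      have h3 := (h1.const_mul Complex.I).cexp
      have h4 : HasDerivAt (fun s : ℝ => x - r k s) (-(deriv (r k) t)) t := by
        simpa using (hasDerivAt_const t x).fun_sub (hr k t).hasDerivAt
      have h5 : HasDerivAt (fun s : ℝ => V (x - r k s))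
          ((-(deriv (r k) t)) • deriv V (x - r k t)) t :=
        (hV (x - r k t)).hasDerivAt.scomp t h4
      exact h3.mul h5
    exact (hsum.add (hwt x t).hasDerivAt).deriv
  -- first space derivative
  have hDx : deriv (fun y : ℝ => pulseSum V r g t y + w t y)
      = fun y : ℝ =>
          (∑ k : Fin n, Complex.exp (Complex.I * g k t) * deriv V (y - r k t))
            + deriv (w t) y := by
    funext y
    have hsum : HasDerivAt (fun y : ℝ => pulseSum V r g t y)
        (∑ k : Fin n, Complex.exp (Complex.I * g k t) * deriv V (y - r k t)) y := by
      apply HasDerivAt.fun_sum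
      intro k _
      have h4 : HasDerivAt (fun y : ℝ => y - r k t) 1 y := (hasDerivAt_id y).sub_const _
      have h5 : HasDerivAt (fun y : ℝ => V (y - r k t)) (deriv V (y - r k t)) y := by
        simpa [Function.comp_def] using (hV (y - r k t)).hasDerivAt.scomp y h4
      exact h5.const_mul _
    exact (hsum.add ((hwx t) y).hasDerivAt).deriv
  -- second space derivative
  have hDxx : deriv (deriv (fun y : ℝ => pulseSum V r g t y + w t y)) x
      = (∑ k : Fin n, Complex.exp (Complex.I * g k t) * deriv (deriv V) (x - r k t))
        + deriv (deriv (w t)) x := by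
    rw [hDx]
    have hsum : HasDerivAt
        (fun y : ℝ => ∑ k : Fin n, Complex.exp (Complex.I * g k t) * deriv V (y - r k t))
        (∑ k : Fin n, Complex.exp (Complex.I * g k t) * deriv (deriv V) (x - r k t)) x := by
      apply HasDerivAt.fun_sum
      intro k _
      have h4 : HasDerivAt (fun y : ℝ => y - r k t) 1 x := (hasDerivAt_id x).sub_const _
      have h5 : HasDerivAt (fun y : ℝ => deriv V (y - r k t)) (deriv (deriv V) (x - r k t)) x := by
        simpa [Function.comp_def] using (hV' (x - r k t)).hasDerivAt.scomp x h4
      exact h5.const_mul _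
    exact (hsum.add ((hwxx t) x).hasDerivAt).deriv
  -- steady pulse equation, summed with phases
  have hα : α * (∑ k : Fin n, Complex.exp (Complex.I * g k t) * deriv (deriv V) (x - r k t))
      = -(β * pulseSum V r g t x)
        - ∑ k : Fin n, qcgleF γ δ (Complex.exp (Complex.I * g k t) * V (x - r k t)) := by
    have hterm : ∀ k : Fin n,
        α * (Complex.exp (Complex.I * g k t) * deriv (deriv V) (x - r k t))
          = -(β * (Complex.exp (Complex.I * g k t) * V (x - r k t)))
            - qcgleF γ δ (Complex.exp (Complex.I * g k t) * V (x - r k t)) := by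
      intro k
      have h := hVeq (x - r k t)
      have hph := qcgleF_phase γ δ (g k t) (V (x - r k t))
      linear_combination Complex.exp (Complex.I * g k t) * h + hph
    rw [Finset.mul_sum, Finset.sum_congr rfl (fun k _ => hterm k)]
    rw [Finset.sum_sub_distrib, pulseSum, Finset.mul_sum]
    simp [Finset.sum_neg_distrib]
  -- rewrite the PDE
  have E := hu t x
  rw [hPt, hDxx] at E
  -- convert the goal's sums to match
  have hr1 : (∑ k : Fin n, (Complex.ofReal (deriv (r k) t))
        * (-(Complex.exp (Complex.I * g k t)) * deriv V (x - r k t)))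
      = ∑ k : Fin n, Complex.exp (Complex.I * g k t)
          * ((-(deriv (r k) t)) • deriv V (x - r k t)) := by
    apply Finset.sum_congr rfl
    intro k _
    simp [Complex.real_smul]
    ring
  have hg1 : (∑ k : Fin n, (Complex.ofReal (deriv (g k) t))
        * (Complex.I * Complex.exp (Complex.I * g k t) * V (x - r k t)))
      = ∑ k : Fin n, Complex.exp (Complex.I * g k t)
          * (Complex.I * Complex.ofReal (deriv (g k) t)) * V (x - r k t) := by
    apply Finset.sum_congr rfl
    intro k _
    ring
  have hsplit : (∑ k : Fin n,
      (Complex.exp (Complex.I * g k t) * (Complex.I * Complex.ofReal (deriv (g k) t))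
          * V (x - r k t)
        + Complex.exp (Complex.I * g k t) * ((-(deriv (r k) t)) • deriv V (x - r k t))))
    = (∑ k : Fin n, Complex.exp (Complex.I * g k t)
          * (Complex.I * Complex.ofReal (deriv (g k) t)) * V (x - r k t))
      + ∑ k : Fin n, Complex.exp (Complex.I * g k t)
          * ((-(deriv (r k) t)) • deriv V (x - r k t)) := Finset.sum_add_distrib
  rw [hsplit] at E
  linear_combination E + hα + hr1 + hg1
end

section
/- Let M₁, M₂, λ_r, λ_i, κ₁, κ₂ ∈ ℝ and define Θ^r(r, g) := M₁·e^{−λ_r|r|}·sin(g − λ_i|r| + κ₁) and Θ^g(r, g) := M₂·sgn(r)·e^{−λ_r|r|}·sin(g − λ_i|r| + κ₂). Suppose r₁, g₁, r₂, g₂ : ℝ → ℝ are differentiable, satisfy r₂(t) − r₁(t) > 0 for all t, and solve the two-pulse leading-order system r₁' = Θ^r(r₂−r₁, g₂−g₁), g₁' = Θ^g(r₂−r₁, g₂−g₁), r₂' = −Θ^r(r₁−r₂, g₁−g₂), g₂' = −Θ^g(r₁−r₂, g₁−g₂). Then the differences r̄ := r₂ − r₁ and ḡ := g₂ − g₁ satisfy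 the planar system r̄' = J·e^{−λ_r·r̄}·sin(−λ_i·r̄ + κ₁)·cos(ḡ) and ḡ' = −K·e^{−λ_r·r̄}·cos(−λ_i·r̄ + κ₂)·sin(ḡ) with J = −2M₁ and K = 2M₂. -/
/-- Reduction of the two-pulse leading-order system to the planar system for the
separation `r̄ = r₂ − r₁` and phase difference `ḡ = g₂ − g₁`, with `J = −2M₁`, `K = 2M₂`. -/
theorem two_pulse_planar_reduction
    (M₁ M₂ lr li κ₁ κ₂ : ℝ)
    (r₁ g₁ r₂ g₂ : ℝ → ℝ)
    (hsep : ∀ t : ℝ, 0 < r₂ t - r₁ t)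
    (hr₁ : ∀ t : ℝ, HasDerivAt r₁
      (M₁ * Real.exp (-lr * |r₂ t - r₁ t|)
        * Real.sin ((g₂ t - g₁ t) - li * |r₂ t - r₁ t| + κ₁)) t)
    (hg₁ : ∀ t : ℝ, HasDerivAt g₁
      (M₂ * Real.sign (r₂ t - r₁ t) * Real.exp (-lr * |r₂ t - r₁ t|)
        * Real.sin ((g₂ t - g₁ t) - li * |r₂ t - r₁ t| + κ₂)) t)
    (hr₂ : ∀ t : ℝ, HasDerivAt r₂
      (-(M₁ * Real.exp (-lr * |r₁ t - r₂ t|)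
        * Real.sin ((g₁ t - g₂ t) - li * |r₁ t - r₂ t| + κ₁))) t)
    (hg₂ : ∀ t : ℝ, HasDerivAt g₂
      (-(M₂ * Real.sign (r₁ t - r₂ t) * Real.exp (-lr * |r₁ t - r₂ t|)
        * Real.sin ((g₁ t - g₂ t) - li * |r₁ t - r₂ t| + κ₂))) t) :
    (∀ t : ℝ, HasDerivAt (fun s : ℝ => r₂ s - r₁ s)
      ((-2 * M₁) * Real.exp (-lr * (r₂ t - r₁ t))
        * Real.sin (-li * (r₂ t - r₁ t) + κ₁) * Real.cos (g₂ t - g₁ t)) t) ∧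
    (∀ t : ℝ, HasDerivAt (fun s : ℝ => g₂ s - g₁ s)
      (-((2 * M₂) * Real.exp (-lr * (r₂ t - r₁ t))
        * Real.cos (-li * (r₂ t - r₁ t) + κ₂) * Real.sin (g₂ t - g₁ t))) t) := by

  have key : ∀ t : ℝ,
      |r₂ t - r₁ t| = r₂ t - r₁ t ∧ |r₁ t - r₂ t| = r₂ t - r₁ t ∧
      Real.sign (r₂ t - r₁ t) = 1 ∧ Real.sign (r₁ t - r₂ t) = -1 := by
    intro t
    have h := hsep t
    refine ⟨abs_of_pos h, ?_, Real.sign_of_pos h, ?_⟩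
    · rw [abs_sub_comm, abs_of_pos h]
    · exact Real.sign_of_neg (by linarith)
  constructor
  · intro t
    obtain ⟨h1, h2, _, _⟩ := key t
    have := (hr₂ t).sub (hr₁ t)
    rw [h1, h2] at this
    refine this.congr_deriv ?_
    have e1 : (g₁ t - g₂ t) - li * (r₂ t - r₁ t) + κ₁
        = (-li * (r₂ t - r₁ t) + κ₁) - (g₂ t - g₁ t) := by ring
    have e2 : (g₂ t - g₁ t) - li * (r₂ t - r₁ t) + κ₁
        = (-li * (r₂ t - r₁ t) + κ₁) + (g₂ t - g₁ t) := by ring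
    rw [e1, e2]
    generalize (-li * (r₂ t - r₁ t) + κ₁ : ℝ) = c
    rw [Real.sin_sub, Real.sin_add]
    ring
  · intro t
    obtain ⟨h1, h2, h3, h4⟩ := key t
    have := (hg₂ t).sub (hg₁ t)
    rw [h1, h2, h3, h4] at this
    refine this.congr_deriv ?_
    have e1 : (g₁ t - g₂ t) - li * (r₂ t - r₁ t) + κ₂
        = (-li * (r₂ t - r₁ t) + κ₂) - (g₂ t - g₁ t) := by ring
    have e2 : (g₂ t - g₁ t) - li * (r₂ t - r₁ t) + κ₂
        = (-li * (r₂ t - r₁ t) + κ₂) + (g₂ t - g₁ t) := by ring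
    rw [e1, e2]
    generalize (-li * (r₂ t - r₁ t) + κ₂ : ℝ) = c
    generalize (g₂ t - g₁ t : ℝ) = y
    rw [Real.sin_sub, Real.sin_add]
    ring
end

section
/- Let J, K, λ_r, λ_i, κ ∈ ℝ and suppose r̄, ḡ : I → ℝ are differentiable on an open interval I and solve the planar system r̄' = J·e^{−λ_r·r̄}·sin(−λ_i·r̄ + κ)·cos(ḡ), ḡ' = −K·e^{−λ_r·r̄}·cos(−λ_i·r̄ + κ)·sin(ḡ) (the case κ₁ = κ₂ = κ). Assume sin(ḡ(t)) ≠ 0 and sin(−λ_i·r̄(t) + κ) ≠ 0 for all t ∈ I. Then the function t ↦ J·λ_i·log|sin(ḡ(t))| − K·log|sin(−λ_i·r̄(t) + κ)| is constant on I. -/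
/-- First integral of the leading-order planar two-pulse system in the Hamiltonian-type
case `κ₁ = κ₂ = κ`: along any solution on an open interval on which `sin ḡ` and
`sin(−λ_i r̄ + κ)` do not vanish, the quantity
`J λ_i log|sin ḡ| − K log|sin(−λ_i r̄ + κ)|` is constant. -/
theorem planar_system_first_integral
    (J K lr li κ : ℝ) (a b : ℝ) (rbar gbar : ℝ → ℝ)
    (hr : ∀ t ∈ Set.Ioo a b, HasDerivAt rbar
      (J * Real.exp (-lr * rbar t) * Real.sin (-li * rbar t + κ) * Real.cos (gbar t)) t)
    (hg : ∀ t ∈ Set.Ioo a b, HasDerivAt gbar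
      (-(K * Real.exp (-lr * rbar t) * Real.cos (-li * rbar t + κ) * Real.sin (gbar t))) t)
    (hgs : ∀ t ∈ Set.Ioo a b, Real.sin (gbar t) ≠ 0)
    (hrs : ∀ t ∈ Set.Ioo a b, Real.sin (-li * rbar t + κ) ≠ 0) :
    ∃ C : ℝ, ∀ t ∈ Set.Ioo a b,
      J * li * Real.log |Real.sin (gbar t)|
        - K * Real.log |Real.sin (-li * rbar t + κ)| = C := by
  set F : ℝ → ℝ := fun t =>
    J * li * Real.log |Real.sin (gbar t)| - K * Real.log |Real.sin (-li * rbar t + κ)|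
    with hF
  have key : ∀ t ∈ Set.Ioo a b, HasDerivAt F 0 t := by
    intro t ht
    have h1 : HasDerivAt (fun t => Real.log |Real.sin (gbar t)|)
        ((Real.sin (gbar t))⁻¹ * (Real.cos (gbar t) *
          (-(K * Real.exp (-lr * rbar t) * Real.cos (-li * rbar t + κ) * Real.sin (gbar t))))) t := by
      have : HasDerivAt (fun t => Real.log (Real.sin (gbar t)))
          ((Real.sin (gbar t))⁻¹ * (Real.cos (gbar t) *
            (-(K * Real.exp (-lr * rbar t) * Real.cos (-li * rbar t + κ) * Real.sin (gbar t))))) t :=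
        HasDerivAt.comp (h := Real.sin ∘ gbar) t (Real.hasDerivAt_log (hgs t ht))
          (((Real.hasDerivAt_sin (gbar t)).comp t (hg t ht)))
      simpa [Real.log_abs] using this
    have h2 : HasDerivAt (fun t => Real.log |Real.sin (-li * rbar t + κ)|)
        ((Real.sin (-li * rbar t + κ))⁻¹ * (Real.cos (-li * rbar t + κ) *
          (-li * (J * Real.exp (-lr * rbar t) * Real.sin (-li * rbar t + κ) * Real.cos (gbar t))))) t := by
      have hin : HasDerivAt (fun t => -li * rbar t + κ)
          (-li * (J * Real.exp (-lr * rbar t) * Real.sin (-li * rbar t + κ) * Real.cos (gbar t))) t :=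
        (((hr t ht).const_mul (-li)).add_const κ)
      have : HasDerivAt (fun t => Real.log (Real.sin (-li * rbar t + κ)))
          ((Real.sin (-li * rbar t + κ))⁻¹ * (Real.cos (-li * rbar t + κ) *
            (-li * (J * Real.exp (-lr * rbar t) * Real.sin (-li * rbar t + κ) * Real.cos (gbar t))))) t :=
        HasDerivAt.comp (h := Real.sin ∘ fun t => -li * rbar t + κ) t (Real.hasDerivAt_log (hrs t ht))
          ((Real.hasDerivAt_sin (-li * rbar t + κ)).comp t hin)
      simpa [Real.log_abs] using this
    have := ((h1.const_mul (J * li)).sub (h2.const_mul K))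
    have hz : J * li * ((Real.sin (gbar t))⁻¹ * (Real.cos (gbar t) *
          (-(K * Real.exp (-lr * rbar t) * Real.cos (-li * rbar t + κ) * Real.sin (gbar t)))))
        - K * ((Real.sin (-li * rbar t + κ))⁻¹ * (Real.cos (-li * rbar t + κ) *
          (-li * (J * Real.exp (-lr * rbar t) * Real.sin (-li * rbar t + κ) * Real.cos (gbar t))))) = 0 := by
      have hs1 : Real.sin (gbar t) * (Real.sin (gbar t))⁻¹ = 1 := mul_inv_cancel₀ (hgs t ht)
      have hs2 : Real.sin (-li * rbar t + κ) * (Real.sin (-li * rbar t + κ))⁻¹ = 1 :=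
        mul_inv_cancel₀ (hrs t ht)
      have hrw : J * li * ((Real.sin (gbar t))⁻¹ * (Real.cos (gbar t) *
            (-(K * Real.exp (-lr * rbar t) * Real.cos (-li * rbar t + κ) * Real.sin (gbar t)))))
          - K * ((Real.sin (-li * rbar t + κ))⁻¹ * (Real.cos (-li * rbar t + κ) *
            (-li * (J * Real.exp (-lr * rbar t) * Real.sin (-li * rbar t + κ) * Real.cos (gbar t)))))
          = (-(J * li * K * Real.exp (-lr * rbar t) * Real.cos (-li * rbar t + κ) * Real.cos (gbar t)))
              * (Real.sin (gbar t) * (Real.sin (gbar t))⁻¹)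
            + (J * li * K * Real.exp (-lr * rbar t) * Real.cos (-li * rbar t + κ) * Real.cos (gbar t))
              * (Real.sin (-li * rbar t + κ) * (Real.sin (-li * rbar t + κ))⁻¹) := by ring
      rw [hrw, hs1, hs2]
      ring
    rw [hz] at this
    exact this
  rcases le_or_gt b a with hab | hab
  · exact ⟨0, fun t ht => ((ht.1.trans ht.2).not_ge hab).elim⟩
  · set t0 := (a + b) / 2
    have ht0 : t0 ∈ Set.Ioo a b := ⟨by simp only [t0]; linarith, by simp only [t0]; linarith⟩
    refine ⟨F t0, fun t ht => ?_⟩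
    have hconst : ‖F t - F t0‖ ≤ 0 * ‖t - t0‖ := by
      exact (convex_Ioo a b).norm_image_sub_le_of_norm_deriv_le
        (fun x hx => (key x hx).differentiableAt)
        (fun x hx => by rw [(key x hx).deriv]; simp) ht0 ht
    have h0 : ‖F t - F t0‖ ≤ 0 := by simpa using hconst
    have : F t = F t0 := sub_eq_zero.mp (norm_le_zero_iff.mp h0)
    simpa [hF] using this
end
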